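/- Let H be an m×n binary matrix with all rows of weight r+1, all columns of weight t ≥ 2, and any two distinct row supports intersecting in at most one coordinate, with r > 2. Then the number of distinct vectors of Hamming weight exactly 2r obtained as sums of two distinct rows of H is at least n·t(t−1)/2. -/

import Mathlib

open Finset
open scoped symmDiff

lemma zmod2_add_ne (x y : ZMod 2) : x + y ≠ 0 ↔ ((x ≠ 0 ∧ ¬ y ≠ 0) ∨ (¬ x ≠ 0 ∧ y ≠ 0)) := by
  revert x y; decide

/-- Let `H` be an `m × n` binary matrix with all rows of weight `r+1`, all columns of
weight `t ≥ 2`, any two distinct row supports intersecting in at most one coordinate, and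
`r > 2`. Then the number of distinct vectors of Hamming weight exactly `2r` obtained as
sums of two distinct rows of `H` is at least `n·t(t-1)/2`. -/
theorem stmt6 (m n r t : ℕ) (hr : 2 < r) (ht : 2 ≤ t)
    (H : Matrix (Fin m) (Fin n) (ZMod 2))
    (hrow : ∀ i : Fin m, (univ.filter (fun j => H i j ≠ 0)).card = r + 1)
    (hcol : ∀ j : Fin n, (univ.filter (fun i => H i j ≠ 0)).card = t)
    (hint : ∀ i₁ i₂ : Fin m, i₁ ≠ i₂ →
      (univ.filter (fun j => H i₁ j ≠ 0 ∧ H i₂ j ≠ 0)).card ≤ 1) :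
    n * (t * (t - 1)) ≤ 2 *
      (((((univ : Finset (Fin m × Fin m)).filter (fun p => p.1 ≠ p.2)).image
          (fun p => fun j => H p.1 j + H p.2 j)).filter
        (fun v => (univ.filter (fun j => v j ≠ 0)).card = 2 * r)).card) := by
  classical
  set A : Fin m → Finset (Fin n) := fun i => univ.filter (fun j => H i j ≠ 0) with hA
  have hAint : ∀ i₁ i₂ : Fin m, i₁ ≠ i₂ → (A i₁ ∩ A i₂).card ≤ 1 := by
    intro i₁ i₂ h
    have := hint i₁ i₂ h
    rwa [filter_and] at this
  have hsing : ∀ i₁ i₂ : Fin m, ∀ j, i₁ ≠ i₂ → j ∈ A i₁ → j ∈ A i₂ →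
      A i₁ ∩ A i₂ = {j} := by
    intro i₁ i₂ j hne h1 h2
    have hj : j ∈ A i₁ ∩ A i₂ := mem_inter.mpr ⟨h1, h2⟩
    refine eq_singleton_iff_unique_mem.mpr ⟨hj, fun x hx => ?_⟩
    exact card_le_one.mp (hAint i₁ i₂ hne) x hx j hj
  have hsupp : ∀ i₁ i₂ : Fin m,
      (univ.filter (fun j => H i₁ j + H i₂ j ≠ 0)) = A i₁ ∆ A i₂ := by
    intro i₁ i₂
    ext j
    simp only [hA, mem_filter, mem_univ, true_and, mem_symmDiff, zmod2_add_ne]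
    tauto
  have hwt : ∀ i₁ i₂ : Fin m, i₁ ≠ i₂ → ∀ j, j ∈ A i₁ → j ∈ A i₂ →
      (univ.filter (fun k => H i₁ k + H i₂ k ≠ 0)).card = 2 * r := by
    intro i₁ i₂ hne j h1 h2
    rw [hsupp i₁ i₂, symmDiff_def, Finset.sup_eq_union,
      card_union_of_disjoint disjoint_sdiff_sdiff]
    have e1 := card_inter_add_card_sdiff (A i₁) (A i₂)
    have e2 := card_inter_add_card_sdiff (A i₂) (A i₁)
    rw [inter_comm] at e2
    have hinter : (A i₁ ∩ A i₂).card = 1 := by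
      rw [hsing i₁ i₂ j hne h1 h2]; simp
    have c1 : (A i₁).card = r + 1 := hrow i₁
    have c2 : (A i₂).card = r + 1 := hrow i₂
    omega
  -- key half-injectivity step
  have step : ∀ a b c d : Fin m, ∀ j : Fin n, a ≠ b → c ≠ d → A a ∩ A b = {j} →
      A a ∆ A b = A c ∆ A d → a = c ∨ a = d := by
    intro a b c d j hab hcd hABj hsd
    by_contra hcon
    push_neg at hcon
    obtain ⟨hac, had⟩ := hcon
    have hsub : A a \ {j} ⊆ (A a ∩ A c) ∪ (A a ∩ A d) := by
      intro x hx
      rw [mem_sdiff, mem_singleton] at hx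
      obtain ⟨hxa, hxj⟩ := hx
      have hxb : x ∉ A b := by
        intro hxb
        exact hxj (mem_singleton.mp (hABj ▸ mem_inter.mpr ⟨hxa, hxb⟩))
      have : x ∈ A c ∆ A d := hsd ▸ mem_symmDiff.mpr (Or.inl ⟨hxa, hxb⟩)
      rw [mem_symmDiff] at this
      rcases this with ⟨h, _⟩ | ⟨h, _⟩
      · exact mem_union_left _ (mem_inter.mpr ⟨hxa, h⟩)
      · exact mem_union_right _ (mem_inter.mpr ⟨hxa, h⟩)
    have hja : j ∈ A a := by
      have : j ∈ A a ∩ A b := hABj ▸ mem_singleton_self j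
      exact (mem_inter.mp this).1
    have hcard : (A a \ {j}).card = r := by
      rw [card_sdiff_of_subset (singleton_subset_iff.mpr hja), hrow a, card_singleton]
      omega
    have hle : (A a \ {j}).card ≤ (A a ∩ A c).card + (A a ∩ A d).card :=
      le_trans (card_le_card hsub) (card_union_le _ _)
    have h1 := hAint a c hac
    have h2 := hAint a d had
    omega
  have key : ∀ a b c d : Fin m, ∀ j j' : Fin n, a ≠ b → c ≠ d →
      j ∈ A a → j ∈ A b → j' ∈ A c → j' ∈ A d →
      A a ∆ A b = A c ∆ A d → (j = j' ∧ ((a = c ∧ b = d) ∨ (a = d ∧ b = c))) := by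
    intro a b c d j j' hab hcd hja hjb hjc hjd hsd
    have hABj : A a ∩ A b = {j} := hsing a b j hab hja hjb
    have hBAj : A b ∩ A a = {j} := by rw [inter_comm]; exact hABj
    have hsd' : A b ∆ A a = A c ∆ A d := by rw [symmDiff_comm]; exact hsd
    have ha := step a b c d j hab hcd hABj hsd
    have hb := step b a c d j hab.symm hcd hBAj hsd'
    have hpair : (a = c ∧ b = d) ∨ (a = d ∧ b = c) := by
      rcases ha with h | h <;> rcases hb with h' | h'
      · exact absurd (h.trans h'.symm) hab
      · exact Or.inl ⟨h, h'⟩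
      · exact Or.inr ⟨h, h'⟩
      · exact absurd (h.trans h'.symm) hab
    refine ⟨?_, hpair⟩
    have hj' : j' ∈ A a ∩ A b := by
      rcases hpair with ⟨rfl, rfl⟩ | ⟨rfl, rfl⟩
      · exact mem_inter.mpr ⟨hjc, hjd⟩
      · exact mem_inter.mpr ⟨hjd, hjc⟩
    rw [hABj, mem_singleton] at hj'
    exact hj'.symm
  -- the counting
  set S := ((((univ : Finset (Fin m × Fin m)).filter (fun p => p.1 ≠ p.2)).image
          (fun p => fun j => H p.1 j + H p.2 j)).filter
        (fun v => (univ.filter (fun j => v j ≠ 0)).card = 2 * r)) with hS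
  set T : Finset (Fin n × Fin m × Fin m) :=
    univ.filter (fun q => q.2.1 ≠ q.2.2 ∧ q.1 ∈ A q.2.1 ∧ q.1 ∈ A q.2.2) with hT
  set f : (Fin n × Fin m × Fin m) → (Fin n → ZMod 2) :=
    fun q => fun j => H q.2.1 j + H q.2.2 j with hf
  have hcardT : T.card = n * (t * (t - 1)) := by
    rw [card_eq_sum_card_fiberwise (f := fun q => q.1) (t := (univ : Finset (Fin n)))
      (fun q _ => mem_univ _)]
    have hfib : ∀ j : Fin n, (T.filter (fun q => q.1 = j)).card = t * (t - 1) := by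
      intro j
      have hbij : (T.filter (fun q => q.1 = j)).card =
          ((univ.filter (fun i => H i j ≠ 0)).offDiag).card := by
        apply card_nbij (fun q => q.2)
        · intro q hq
          simp only [hT, mem_coe, mem_filter, mem_univ, true_and] at hq
          obtain ⟨⟨hne, h1, h2⟩, rfl⟩ := hq
          rw [mem_coe, mem_offDiag]
          simp only [hA, mem_filter, mem_univ, true_and] at h1 h2 ⊢
          exact ⟨h1, h2, hne⟩
        · intro q hq q' hq' hqq
          simp only [mem_coe, mem_filter] at hq hq'
          exact Prod.ext (hq.2.trans hq'.2.symm) hqq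
        · intro p hp
          rw [mem_coe, mem_offDiag] at hp
          refine ⟨(j, p), ?_, rfl⟩
          simp only [hT, mem_coe, mem_filter, mem_univ, true_and, hA]
          simp only [mem_filter, mem_univ, true_and] at hp
          exact ⟨⟨hp.2.2, hp.1, hp.2.1⟩, trivial⟩
      rw [hbij, offDiag_card, hcol j]
      obtain ⟨t', rfl⟩ : ∃ t', t = t' + 1 := ⟨t - 1, by omega⟩
      have : (t' + 1) * (t' + 1) = (t' + 1) * t' + (t' + 1) := by ring
      simp only [Nat.succ_sub_one]
      omega
    rw [Finset.sum_congr rfl (fun j _ => hfib j), sum_const, card_univ, Fintype.card_fin,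
      smul_eq_mul]
  rw [← hcardT]
  apply card_le_mul_card_image_of_maps_to (f := f)
  · -- maps to S
    intro q hq
    simp only [hT, mem_filter, mem_univ, true_and] at hq
    obtain ⟨hne, h1, h2⟩ := hq
    rw [hS, mem_filter]
    constructor
    · exact mem_image.mpr ⟨(q.2.1, q.2.2), mem_filter.mpr ⟨mem_univ _, hne⟩, rfl⟩
    · exact hwt q.2.1 q.2.2 hne q.1 h1 h2
  · -- fibers ≤ 2
    intro v _
    rcases (T.filter (fun q => f q = v)).eq_empty_or_nonempty with he | ⟨q, hq⟩
    · simp [he]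
    have hsub : T.filter (fun q => f q = v) ⊆ {q, (q.1, q.2.2, q.2.1)} := by
      intro q' hq'
      rw [mem_filter] at hq hq'
      obtain ⟨hqT, hqv⟩ := hq
      obtain ⟨hq'T, hq'v⟩ := hq'
      simp only [hT, mem_filter, mem_univ, true_and] at hqT hq'T
      obtain ⟨hab, hja, hjb⟩ := hqT
      obtain ⟨hcd, hjc, hjd⟩ := hq'T
      have hfv : f q = f q' := hqv.trans hq'v.symm
      have hsd : A q.2.1 ∆ A q.2.2 = A q'.2.1 ∆ A q'.2.2 := by
        rw [← hsupp, ← hsupp]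
        apply filter_congr
        intro k _
        simp only [hf] at hfv
        rw [congrFun hfv k]
      obtain ⟨hjj, hpair⟩ := key q.2.1 q.2.2 q'.2.1 q'.2.2 q.1 q'.1 hab hcd hja hjb hjc hjd hsd
      rcases hpair with ⟨h1, h2⟩ | ⟨h1, h2⟩
      · apply mem_insert.mpr; left
        exact Prod.ext hjj.symm (Prod.ext h1.symm h2.symm)
      · apply mem_insert.mpr; right
        rw [mem_singleton]
        exact Prod.ext hjj.symm (Prod.ext h2.symm h1.symm)
    calc (T.filter (fun q => f q = v)).card ≤ _ := card_le_card hsub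
      _ ≤ 2 := by
        apply le_trans (card_insert_le _ _)
        simp
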